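/- Let M be a simple rank-3 matroid on [d] and let X ⊆ [d] be a nonempty subset that does not contain a cycle. Then there exists a point x ∈ X such that at most one line of M through x meets X \ {x}, i.e. |{l : l is a line of M, x ∈ l, l ∩ (X \ {x}) ≠ ∅}| ≤ 1. -/

import Mathlib

/-- A point-line "pre-matroid": a ground set together with an independence predicate.
The matroid axioms are stated separately as `PLM.IsMatroid`. -/
structure PLM (α : Type) where
  E : Set α
  Indep : Set α → Prop

namespace PLM

variable {α : Type}

/-- The matroid axioms: finite ground set, the empty set is independent, independent sets
are contained in the ground set, hereditary property, and the exchange property. -/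
def IsMatroid (M : PLM α) : Prop :=
  M.E.Finite ∧ M.Indep ∅ ∧ (∀ I, M.Indep I → I ⊆ M.E) ∧
    (∀ I J, M.Indep J → I ⊆ J → M.Indep I) ∧
    (∀ I J, M.Indep I → M.Indep J → I.ncard < J.ncard → ∃ e ∈ J \ I, M.Indep (insert e I))

/-- A matroid is simple if every subset of the ground set of size at most 2 is independent. -/
def Simple (M : PLM α) : Prop := ∀ S ⊆ M.E, S.ncard ≤ 2 → M.Indep S

/-- Rank at most three: every independent set has at most 3 elements. -/
def RankLE3 (M : PLM α) : Prop := ∀ I, M.Indep I → I.ncard ≤ 3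

/-- Rank exactly three. -/
def RankEq3 (M : PLM α) : Prop := M.RankLE3 ∧ ∃ I, M.Indep I ∧ I.ncard = 3

/-- The property of being a dependent subset of the ground set all of whose
3-element subsets are dependent. -/
def LinePre (M : PLM α) (l : Set α) : Prop :=
  l ⊆ M.E ∧ ¬ M.Indep l ∧ ∀ t ⊆ l, t.ncard = 3 → ¬ M.Indep t

/-- A line: a maximal dependent subset of the ground set in which every
3-element subset is dependent. -/
def IsLine (M : PLM α) (l : Set α) : Prop :=
  M.LinePre l ∧ ∀ l', M.LinePre l' → l ⊆ l' → l' = l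

/-- The degree of a point: the number of lines containing it. -/
noncomputable def degree (M : PLM α) (p : α) : ℕ :=
  {l : Set α | M.IsLine l ∧ p ∈ l}.ncard

/-- Restriction of `M` to a subset `X` of the ground set. -/
def restrict (M : PLM α) (X : Set α) : PLM α :=
  ⟨M.E ∩ X, fun I => M.Indep I ∧ I ⊆ X⟩

/-- The matroid `M(J)` obtained from `M` by turning every point of `J` into a loop:
a set is independent iff it is an independent set of `M` contained in `E \ J`. -/
def loopify (M : PLM α) (J : Set α) : PLM α :=
  ⟨M.E, fun I => M.Indep I ∧ I ⊆ M.E \ J⟩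

/-- One step of the nilpotency chain: restrict to the set `S_M` of points of degree at least 2. -/
noncomputable def Sstep (M : PLM α) : PLM α :=
  M.restrict {p ∈ M.E | 2 ≤ M.degree p}

/-- `M` is nilpotent if iterating `Sstep` eventually reaches the empty ground set. -/
def Nilpotent (M : PLM α) : Prop := ∃ n : ℕ, (PLM.Sstep^[n] M).E = (∅ : Set α)

/-- `Q_M`: the set of points of degree at least 3. -/
def Qset (M : PLM α) : Set α := {p ∈ M.E | 3 ≤ M.degree p}

/-- A circuit: a minimal dependent subset of the ground set. -/
def Circuit (M : PLM α) (C : Set α) : Prop :=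
  C ⊆ M.E ∧ ¬ M.Indep C ∧ ∀ C', C' ⊂ C → M.Indep C'

end PLM

/-! Realization spaces for matroids on `Fin d`, with configurations in `ℂ^{3d}`. -/

/-- A point of `ℂ^{3d}`, viewed as `d` vectors in `ℂ³`. -/
abbrev Config (d : ℕ) := Fin d × Fin 3 → ℂ

/-- The `i`-th vector of a configuration. -/
def cvec {d : ℕ} (γ : Config d) (i : Fin d) : Fin 3 → ℂ := fun j => γ (i, j)

/-- The family of vectors indexed by `S` is linearly dependent. -/
def LinDep {d : ℕ} (γ : Config d) (S : Set (Fin d)) : Prop :=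
  ¬ LinearIndependent ℂ (fun i : S => cvec γ i)

/-- The realization space `Γ_M ⊆ ℂ^{3d}`: tuples such that a subset of the ground set is
dependent iff the corresponding vectors are linearly dependent. -/
def realizationSpace {d : ℕ} (M : PLM (Fin d)) : Set (Config d) :=
  {γ | ∀ S ⊆ M.E, (¬ M.Indep S ↔ LinDep γ S)}

/-- The circuit variety `V_{C(M)}`: tuples whose vectors satisfy all dependencies of `M`. -/
def circuitVariety {d : ℕ} (M : PLM (Fin d)) : Set (Config d) :=
  {γ | ∀ S ⊆ M.E, ¬ M.Indep S → LinDep γ S}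

/-- The matroid variety `V_M`: the Zariski closure of the realization space, i.e. the zero
locus of the vanishing ideal of `Γ_M` in the polynomial ring in `3d` variables. -/
noncomputable def matroidVariety {d : ℕ} (M : PLM (Fin d)) : Set (Config d) :=
  MvPolynomial.zeroLocus ℂ (MvPolynomial.vanishingIdeal ℂ (realizationSpace M))


/-- A subset `X` of the ground set contains a cycle: there are `k ≥ 3` pairwise distinct
points `x_1, …, x_k ∈ X` and pairwise distinct lines `l_1, …, l_k` with
`{x_i, x_{i+1}} ⊆ l_i` (indices mod `k`). -/
def ContainsCycle {d : ℕ} (M : PLM (Fin d)) (X : Set (Fin d)) : Prop :=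
  ∃ m : ℕ, ∃ (x : Fin (m + 3) → Fin d) (l : Fin (m + 3) → Set (Fin d)),
    Function.Injective x ∧ Function.Injective l ∧
    (∀ i, x i ∈ X) ∧ (∀ i, M.IsLine (l i)) ∧
    (∀ i : Fin (m + 3), x i ∈ l i ∧ x (i + 1) ∈ l i)

namespace StmtAux

lemma indep_pair {d : ℕ} {M : PLM (Fin d)} (hE : M.E = Set.univ) (hs : M.Simple)
    (x y : Fin d) : M.Indep {x, y} := by
  apply hs _ (by rw [hE]; exact Set.subset_univ _)
  exact le_trans (Set.ncard_insert_le _ _) (by simp)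

lemma line_unique {d : ℕ} {M : PLM (Fin d)} (hE : M.E = Set.univ) (hmat : M.IsMatroid)
    (hs : M.Simple) {l l' : Set (Fin d)} (hl : M.IsLine l) (hl' : M.IsLine l')
    {x y : Fin d} (hxy : x ≠ y) (hxl : x ∈ l) (hyl : y ∈ l) (hxl' : x ∈ l') (hyl' : y ∈ l') :
    l = l' := by
  obtain ⟨hEfin, hemp, hsub, hher, haug⟩ := hmat
  have hsubE : ∀ S : Set (Fin d), S ⊆ M.E := fun S => by rw [hE]; exact Set.subset_univ _
  set N : Matroid (Fin d) := (IndepMatroid.ofFinite hEfin M.Indep hemp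
    (fun I J hJ hIJ => hher I J hJ hIJ)
    (fun I J hI hJ hlt => by
      obtain ⟨e, he, hind⟩ := haug I J hI hJ hlt
      exact ⟨e, he.1, he.2, hind⟩)
    (fun I hI => hsub I hI)).matroid with hN
  have hNi : ∀ I : Set (Fin d), N.Indep I ↔ M.Indep I := fun I => by
    rw [hN]; simp
  have hNE : N.E = M.E := by rw [hN]; simp
  have hpair : N.Indep {x, y} := (hNi _).2 (indep_pair hE hs x y)
  set F := N.closure {x, y} with hF
  have hmem : ∀ z : Fin d, z ∉ ({x, y} : Set (Fin d)) → ¬ M.Indep {x, y, z} → z ∈ F := by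
    intro z hz hdep
    rw [hF, hpair.mem_closure_iff]
    left
    rw [Matroid.dep_iff]
    refine ⟨?_, by rw [hNE]; exact hsubE _⟩
    rw [hNi]
    intro h
    apply hdep
    apply hher _ _ h
    intro a ha
    simp only [Set.mem_insert_iff, Set.mem_singleton_iff] at ha ⊢
    tauto
  have hlsub : ∀ m : Set (Fin d), M.IsLine m → x ∈ m → y ∈ m → m ⊆ F := by
    intro m hm hxm hym z hz
    by_cases hzxy : z ∈ ({x, y} : Set (Fin d))
    · exact N.subset_closure {x, y} (by rw [hNE]; exact hsubE _) hzxy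
    · refine hmem z hzxy (hm.1.2.2 {x, y, z} ?_ ?_)
      · intro a ha
        simp only [Set.mem_insert_iff, Set.mem_singleton_iff] at ha
        rcases ha with rfl | rfl | rfl <;> assumption
      · simp only [Set.mem_insert_iff, Set.mem_singleton_iff, not_or] at hzxy
        exact Set.ncard_eq_three.2 ⟨x, y, z, hxy, Ne.symm hzxy.1, Ne.symm hzxy.2, rfl⟩
  have hFpre : M.LinePre F := by
    refine ⟨hsubE _, ?_, ?_⟩
    · intro h
      exact hl.1.2.1 (hher _ _ h (hlsub l hl hxl hyl))
    · intro t ht h3 hti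
      have htN : N.Indep t := (hNi _).2 hti
      have h32 : ({x, y} : Set (Fin d)).encard < t.encard := by
        obtain ⟨a, b, c, hab, hac, hbc, rfl⟩ := Set.ncard_eq_three.1 h3
        rw [Set.encard_pair hxy, Set.encard_eq_three.2 ⟨a, b, c, hab, hac, hbc, rfl⟩]
        norm_num
      obtain ⟨e, he, hins⟩ := hpair.augment htN h32
      have heF : e ∈ F := ht he.1
      rw [hF, hpair.mem_closure_iff] at heF
      rcases heF with hd | hm
      · exact hd.not_indep hins
      · exact he.2 hm
  rw [← hl.2 F hFpre (hlsub l hl hxl hyl), ← hl'.2 F hFpre (hlsub l' hl' hxl' hyl')]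

def IsPath {d : ℕ} (M : PLM (Fin d)) (X : Set (Fin d)) (n : ℕ)
    (x : ℕ → Fin d) (l : ℕ → Set (Fin d)) : Prop :=
  (∀ i ≤ n, x i ∈ X) ∧ (∀ i < n, M.IsLine (l i)) ∧
  (∀ i ≤ n, ∀ j ≤ n, x i = x j → i = j) ∧
  (∀ i < n, ∀ j < n, l i = l j → i = j) ∧
  (∀ i < n, x i ∈ l i ∧ x (i + 1) ∈ l i)

lemma path_lt {d : ℕ} {M : PLM (Fin d)} {X : Set (Fin d)} {n : ℕ}
    {x : ℕ → Fin d} {l : ℕ → Set (Fin d)} (h : IsPath M X n x l) : n < d := by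
  have := Finset.card_le_card_of_injOn (f := x) (s := Finset.range (n + 1))
    (t := (Finset.univ : Finset (Fin d)))
    (fun i _ => Finset.mem_univ _)
    (fun i hi j hj hij => h.2.2.1 i (by simpa using Nat.lt_succ_iff.1 (Finset.mem_range.1 hi))
      j (by simpa using Nat.lt_succ_iff.1 (Finset.mem_range.1 hj)) hij)
  simpa using this

lemma cycle_of_closed_walk {d : ℕ} {M : PLM (Fin d)} (hE : M.E = Set.univ)
    (hmat : M.IsMatroid) (hs : M.Simple) (X : Set (Fin d))
    (k : ℕ) (hk : 2 ≤ k) (y : ℕ → Fin d) (m : ℕ → Set (Fin d))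
    (hyX : ∀ i < k, y i ∈ X) (hml : ∀ i < k, M.IsLine (m i))
    (hyi : ∀ i < k, ∀ j < k, y i = y j → i = j)
    (hmi : ∀ i < k, ∀ j < k, m i = m j → i = j)
    (hinc : ∀ i < k, y i ∈ m i ∧ y ((i + 1) % k) ∈ m i) :
    ContainsCycle M X := by
  rcases Nat.lt_or_ge k 3 with h3 | h3
  · -- k = 2 : impossible by line_unique
    exfalso
    have hk2 : k = 2 := by omega
    subst hk2
    have h0 := hinc 0 (by omega)
    have h1 := hinc 1 (by omega)
    norm_num at h0 h1
    have hne : y 0 ≠ y 1 := fun h => by simpa using hyi 0 (by omega) 1 (by omega) h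
    have : m 0 = m 1 :=
      StmtAux.line_unique hE hmat hs (hml 0 (by omega)) (hml 1 (by omega)) hne
        h0.1 h0.2 h1.2 h1.1
    simpa using hmi 0 (by omega) 1 (by omega) this
  · refine ⟨k - 3, fun i => y i.val, fun i => m i.val, ?_, ?_, ?_, ?_, ?_⟩
    · intro i j hij
      exact Fin.ext (hyi i.val (by omega) j.val (by omega) hij)
    · intro i j hij
      exact Fin.ext (hmi i.val (by omega) j.val (by omega) hij)
    · intro i; exact hyX i.val (by omega)
    · intro i; exact hml i.val (by omega)
    · intro i
      have hv : i.val < k := by omega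
      have hadd : ((i + 1 : Fin (k - 3 + 3))).val = (i.val + 1) % k := by
        rw [Fin.val_add, Fin.val_one']
        have h1 : 1 % (k - 3 + 3) = 1 := Nat.mod_eq_of_lt (by omega)
        rw [h1]
        congr 1
        omega
      simp only []
      rw [hadd]
      exact hinc i.val hv

end StmtAux

/-- Let `M` be a simple rank-3 matroid on `[d]` and let `X` be a
nonempty subset of points that does not contain a cycle.  Then there is a point `x ∈ X`
such that at most one line of `M` through `x` meets `X \ {x}`. -/
theorem exists_point_with_at_most_one_line (d : ℕ) (M : PLM (Fin d))
    (hE : M.E = Set.univ) (hmat : M.IsMatroid) (hs : M.Simple) (hrk : M.RankEq3)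
    (X : Set (Fin d)) (hne : X.Nonempty) (hX : ¬ ContainsCycle M X) :
    ∃ x ∈ X, {l : Set (Fin d) | M.IsLine l ∧ x ∈ l ∧ (l ∩ (X \ {x})).Nonempty}.ncard ≤ 1 := by
  by_contra hcon
  push_neg at hcon
  apply hX
  -- paths
  have hP0 : ∃ x l, StmtAux.IsPath M X 0 x l := by
    obtain ⟨x₀, hx₀⟩ := hne
    exact ⟨fun _ => x₀, fun _ => ∅,
      fun i hi => hx₀, fun i hi => absurd hi (by omega),
      fun i hi j hj _ => by omega, fun i hi => absurd hi (by omega),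
      fun i hi => absurd hi (by omega)⟩
  set S : Set ℕ := {n | ∃ x l, StmtAux.IsPath M X n x l} with hS
  have hbdd : BddAbove S := ⟨d, fun n hn => by
    obtain ⟨x, l, hp⟩ := hn; exact le_of_lt (StmtAux.path_lt hp)⟩
  have hn₀mem : sSup S ∈ S := Nat.sSup_mem ⟨0, hP0⟩ hbdd
  set n₀ := sSup S with hn₀
  have hmax : ∀ n ∈ S, n ≤ n₀ := fun n hn => le_csSup hbdd hn
  obtain ⟨x, l, hxX, hll, hxinj, hlinj, hinc⟩ := hn₀mem
  set p := x n₀ with hp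
  have hpX : p ∈ X := hxX n₀ le_rfl
  have h2 := (Set.one_lt_ncard_iff (Set.toFinite _)).1 (hcon p hpX)
  obtain ⟨l₁, l₂, hl₁, hl₂, hne12⟩ := h2
  simp only [Set.mem_setOf_eq] at hl₁ hl₂
  have hpick : ∃ L, (M.IsLine L ∧ p ∈ L ∧ (L ∩ (X \ {p})).Nonempty) ∧
      (1 ≤ n₀ → L ≠ l (n₀ - 1)) := by
    by_cases h : l₁ = l (n₀ - 1)
    · exact ⟨l₂, hl₂, fun _ hn => hne12 (h ▸ hn.symm ▸ rfl)⟩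
    · exact ⟨l₁, hl₁, fun _ => h⟩
  obtain ⟨L, ⟨hLline, hpL, hLne⟩, hLlast⟩ := hpick
  obtain ⟨y, hyL, hyX', hyp⟩ : ∃ y, y ∈ L ∧ y ∈ X ∧ y ≠ p := by
    obtain ⟨y, hy1, hy2⟩ := hLne
    exact ⟨y, hy1, hy2.1, hy2.2⟩
  by_cases hAcase : ∀ j < n₀, l j ≠ L
  · -- Case A
    by_cases hA1 : ∀ i ≤ n₀, x i ≠ y
    · -- extend the path: contradiction with maximality
      exfalso
      have hpath : StmtAux.IsPath M X (n₀ + 1)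
          (fun i => if i = n₀ + 1 then y else x i)
          (fun j => if j = n₀ then L else l j) := by
        refine ⟨?_, ?_, ?_, ?_, ?_⟩
        · intro i hi
          by_cases h : i = n₀ + 1
          · simp only [if_pos h]; exact hyX'
          · simp only [if_neg h]; exact hxX i (by omega)
        · intro i hi
          by_cases h : i = n₀
          · simpa [h] using hLline
          · simp only [if_neg h]; exact hll i (by omega)
        · intro i hi j hj hij
          by_cases h1 : i = n₀ + 1 <;> by_cases h2 : j = n₀ + 1
          · omega
          · simp only [if_pos h1, if_neg h2] at hij
            exact absurd hij.symm (hA1 j (by omega))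
          · simp only [if_neg h1, if_pos h2] at hij
            exact absurd hij (hA1 i (by omega))
          · simp only [if_neg h1, if_neg h2] at hij
            exact hxinj i (by omega) j (by omega) hij
        · intro i hi j hj hij
          by_cases h1 : i = n₀ <;> by_cases h2 : j = n₀
          · omega
          · simp only [if_pos h1, if_neg h2] at hij
            exact absurd hij.symm (hAcase j (by omega))
          · simp only [if_neg h1, if_pos h2] at hij
            exact absurd hij (hAcase i (by omega))
          · simp only [if_neg h1, if_neg h2] at hij
            exact hlinj i (by omega) j (by omega) hij
        · intro i hi
          by_cases h : i = n₀
          · constructor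
            · simp only [if_neg (show ¬ i = n₀ + 1 by omega), if_pos h]
              rw [h]; exact hpL
            · simp only [if_pos (show i + 1 = n₀ + 1 by omega), if_pos h]
              exact hyL
          · have hi' : i < n₀ := by omega
            simp only [if_neg h, if_neg (by omega : ¬ i = n₀ + 1),
              if_neg (by omega : ¬ i + 1 = n₀ + 1)]
            exact hinc i hi'
      have := hmax (n₀ + 1) ⟨_, _, hpath⟩
      omega
    · -- closed walk of length n₀ - j + 1
      push_neg at hA1
      obtain ⟨j, hj, hjy⟩ := hA1
      have hjn : j < n₀ := by
        rcases Nat.lt_or_ge j n₀ with h | h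
        · exact h
        · exfalso; have : j = n₀ := by omega
          exact hyp (by rw [← hjy, this])
      set k := n₀ - j + 1 with hk
      refine StmtAux.cycle_of_closed_walk hE hmat hs X k (by omega)
        (fun i => x (j + i)) (fun i => if i = n₀ - j then L else l (j + i))
        ?_ ?_ ?_ ?_ ?_
      · intro i hi; exact hxX _ (by omega)
      · intro i hi
        by_cases h : i = n₀ - j
        · simpa [h] using hLline
        · simp only [if_neg h]; exact hll _ (by omega)
      · intro i hi i' hi' hii
        have := hxinj (j + i) (by omega) (j + i') (by omega) hii
        omega
      · intro i hi i' hi' hii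
        by_cases h1 : i = n₀ - j <;> by_cases h2 : i' = n₀ - j
        · omega
        · simp only [if_pos h1, if_neg h2] at hii
          exact absurd hii.symm (hAcase (j + i') (by omega))
        · simp only [if_neg h1, if_pos h2] at hii
          exact absurd hii (hAcase (j + i) (by omega))
        · simp only [if_neg h1, if_neg h2] at hii
          have := hlinj (j + i) (by omega) (j + i') (by omega) hii
          omega
      · intro i hi
        by_cases h : i = n₀ - j
        · subst h
          constructor
          · simp only [if_pos rfl]
            have : j + (n₀ - j) = n₀ := by omega
            rw [this]; exact hpL
          · simp only [if_pos rfl]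
            have : (n₀ - j + 1) % k = 0 := by rw [hk]; exact Nat.mod_self _
            rw [this]
            simpa [hjy] using hyL
        · have hik : i < n₀ - j := by omega
          have h1 : (i + 1) % k = i + 1 := Nat.mod_eq_of_lt (by omega)
          simp only [if_neg h, h1]
          have := hinc (j + i) (by omega)
          exact ⟨this.1, by
            have harith : j + (i + 1) = j + i + 1 := by omega
            rw [harith]; exact this.2⟩
  · -- Case B : L = l j for some j < n₀
    push_neg at hAcase
    obtain ⟨j, hj, hjL⟩ := hAcase
    have hn₀1 : 1 ≤ n₀ := by omega
    have hjne : j ≠ n₀ - 1 := by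
      intro h; exact hLlast hn₀1 (by rw [← hjL, h])
    have hjlt : j < n₀ - 1 := by omega
    set k := n₀ - j with hk
    have hk2 : 2 ≤ k := by omega
    refine StmtAux.cycle_of_closed_walk hE hmat hs X k hk2
      (fun i => x (j + 1 + i)) (fun i => if i = k - 1 then l j else l (j + 1 + i))
      ?_ ?_ ?_ ?_ ?_
    · intro i hi; exact hxX _ (by omega)
    · intro i hi
      by_cases h : i = k - 1
      · simpa [h] using hll j hj
      · simp only [if_neg h]; exact hll _ (by omega)
    · intro i hi i' hi' hii
      have := hxinj (j + 1 + i) (by omega) (j + 1 + i') (by omega) hii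
      omega
    · intro i hi i' hi' hii
      by_cases h1 : i = k - 1 <;> by_cases h2 : i' = k - 1
      · omega
      · simp only [if_pos h1, if_neg h2] at hii
        have := hlinj j hj (j + 1 + i') (by omega) hii
        omega
      · simp only [if_neg h1, if_pos h2] at hii
        have := hlinj (j + 1 + i) (by omega) j hj hii
        omega
      · simp only [if_neg h1, if_neg h2] at hii
        have := hlinj (j + 1 + i) (by omega) (j + 1 + i') (by omega) hii
        omega
    · intro i hi
      by_cases h : i = k - 1
      · subst h
        constructor
        · simp only [if_pos rfl]
          have : j + 1 + (k - 1) = n₀ := by omega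
          rw [this, hjL]
          exact hpL
        · simp only [if_pos rfl]
          have : (k - 1 + 1) % k = 0 := by
            have : k - 1 + 1 = k := by omega
            rw [this]; exact Nat.mod_self _
          rw [this]
          simpa using (hinc j hj).2
      · have hik : i < k - 1 := by omega
        have h1 : (i + 1) % k = i + 1 := Nat.mod_eq_of_lt (by omega)
        simp only [if_neg h, h1]
        have := hinc (j + 1 + i) (by omega)
        exact ⟨this.1, by
          have harith : j + 1 + (i + 1) = j + 1 + i + 1 := by omega
          rw [harith]; exact this.2⟩
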